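/- Let λ₁, λ₂, ρ₁, ρ₂ > 0, ε₀ > 0, p ∈ [0,1], and set B = ε₀/ρ₂, C = ε₀/ρ₁, k = ε₀ρ₂/ρ₁. Let X₁ ~ Exp(λ₁) and X₂ ~ Exp(λ₂) be independent, and let E be an event independent of (X₁,X₂) with P(E) = p. Define the success event S = ({X₁ > kX₂ + C} ∩ {X₂ > B}) on Eᶜ and S = ({X₂ > kX₁ + C} ∩ {X₁ > B}) on E. Then P(Sᶜ) = 1 − (1−p)·(λ₂/(λ₂+kλ₁))·e^{−λ₁C − (λ₂+kλ₁)B} − p·(λ₁/(λ₁+kλ₂))·e^{−λ₂C − (λ₁+kλ₂)B}. -/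

import Mathlib

open MeasureTheory ProbabilityTheory Real Set

lemma exp_tail_integral {a : ℝ} (ha : 0 < a) (B : ℝ) :
    ∫ x in Ioi B, Real.exp (-(a * x)) = Real.exp (-(a * B)) / a := by
  have hderiv : ∀ x ∈ Ici B, HasDerivAt (fun x => -Real.exp (-(a * x)) / a)
      (Real.exp (-(a * x))) x := by
    intro x _
    have h := (ProbabilityTheory.hasDerivAt_neg_exp_mul_exp (r := a) (x := x)).div_const a
    simpa [mul_div_assoc, mul_div_cancel_left₀ _ ha.ne'] using h
  have hint : IntegrableOn (fun x => Real.exp (-(a * x))) (Ioi B) := by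
    simpa [neg_mul] using exp_neg_integrableOn_Ioi B ha
  have htend : Filter.Tendsto (fun x => -Real.exp (-(a * x)) / a) Filter.atTop (nhds 0) := by
    have h1 : Filter.Tendsto (fun x : ℝ => -(a * x)) Filter.atTop Filter.atBot := by
      simpa [neg_mul] using Filter.tendsto_id.const_mul_atTop_of_neg (neg_neg_iff_pos.2 ha)
    have h2 : Filter.Tendsto (fun x : ℝ => Real.exp (-(a * x))) Filter.atTop (nhds 0) :=
      Real.tendsto_exp_atBot.comp h1
    simpa using (h2.neg).div_const a
  have := integral_Ioi_of_hasDerivAt_of_tendsto' hderiv hint htend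
  rw [this]
  ring

lemma lintegral_ofReal_exp_Ioi {a : ℝ} (ha : 0 < a) {c : ℝ} (hc : 0 ≤ c) (B : ℝ) :
    ∫⁻ y in Ioi B, ENNReal.ofReal (c * Real.exp (-(a * y)))
      = ENNReal.ofReal (c * (Real.exp (-(a * B)) / a)) := by
  rw [← ofReal_integral_eq_lintegral_ofReal]
  · rw [MeasureTheory.integral_const_mul, exp_tail_integral ha]
  · simpa [neg_mul] using (exp_neg_integrableOn_Ioi B ha).const_mul c
  · exact Filter.Eventually.of_forall fun y => mul_nonneg hc (Real.exp_pos _).le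

lemma expMeasure_Ioi {r : ℝ} (hr : 0 < r) {t : ℝ} (ht : 0 ≤ t) :
    expMeasure r (Ioi t) = ENNReal.ofReal (Real.exp (-(r * t))) := by
  have : IsProbabilityMeasure (expMeasure r) := isProbabilityMeasure_expMeasure hr
  have hpdf : gammaPDF 1 r = exponentialPDF r := by
    funext x
    simp [gammaPDF, exponentialPDF, exponentialPDFReal]
  have h1 : expMeasure r (Iic t) = ENNReal.ofReal (1 - Real.exp (-(r * t))) := by
    rw [expMeasure, gammaMeasure, withDensity_apply _ measurableSet_Iic, hpdf]
    simpa [if_pos ht] using ProbabilityTheory.lintegral_exponentialPDF_eq_antiDeriv hr t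
  have h2 := measure_compl (μ := expMeasure r) (s := Iic t) measurableSet_Iic (measure_ne_top _ _)
  rw [compl_Iic] at h2
  rw [h2, measure_univ, h1, ENNReal.ofReal_sub _ (Real.exp_pos _).le, ENNReal.ofReal_one]
  refine ENNReal.sub_sub_cancel ENNReal.one_ne_top (ENNReal.ofReal_le_one.2 ?_)
  exact Real.exp_le_one_iff.2 (by nlinarith)

lemma exp_joint_tail {l₁ l₂ k C B : ℝ} (hl₁ : 0 < l₁) (hl₂ : 0 < l₂)
    (hk : 0 < k) (hC : 0 ≤ C) (hB : 0 ≤ B) :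
    ((expMeasure l₁).prod (expMeasure l₂)) {p : ℝ × ℝ | k * p.2 + C < p.1 ∧ B < p.2}
      = ENNReal.ofReal (l₂ / (l₂ + k * l₁) * Real.exp (-l₁ * C - (l₂ + k * l₁) * B)) := by
  have : IsProbabilityMeasure (expMeasure l₁) := isProbabilityMeasure_expMeasure hl₁
  have : IsProbabilityMeasure (expMeasure l₂) := isProbabilityMeasure_expMeasure hl₂
  set s : Set (ℝ × ℝ) := {p : ℝ × ℝ | k * p.2 + C < p.1 ∧ B < p.2} with hs_def
  have hs : MeasurableSet s :=
    ((measurableSet_lt ((measurable_snd.const_mul k).add_const C) measurable_fst).inter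
      (measurableSet_lt measurable_const measurable_snd))
  have hslice : ∀ y : ℝ, expMeasure l₁ ((fun x => (x, y)) ⁻¹' s)
      = Set.indicator (Ioi B) (fun y => ENNReal.ofReal (Real.exp (-(l₁ * (k * y + C))))) y := by
    intro y
    by_cases hy : B < y
    · rw [Set.indicator_of_mem (Set.mem_Ioi.mpr hy)]
      have hset : (fun x => (x, y)) ⁻¹' s = Ioi (k * y + C) := by
        ext x; simp [hs_def, hy]
      rw [hset, expMeasure_Ioi hl₁ (by nlinarith)]
    · rw [Set.indicator_of_notMem (by simpa using hy)]
      have hset : (fun x => (x, y)) ⁻¹' s = ∅ := by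
        ext x; simp [hs_def, hy]
      simp [hset]
  rw [Measure.prod_apply_symm hs]
  simp_rw [hslice]
  rw [lintegral_indicator measurableSet_Ioi]
  have hrw : expMeasure l₂ = volume.withDensity (exponentialPDF l₂) := rfl
  have hmeasPDF : Measurable (exponentialPDF l₂) :=
    (measurable_exponentialPDFReal l₂).ennreal_ofReal
  rw [hrw, restrict_withDensity measurableSet_Ioi,
    lintegral_withDensity_eq_lintegral_mul _ hmeasPDF (by fun_prop)]
  set a : ℝ := l₂ + k * l₁ with ha_def
  have ha : 0 < a := by positivity
  have hcongr : ∀ y ∈ Ioi B, (exponentialPDF l₂ * fun y =>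
        ENNReal.ofReal (Real.exp (-(l₁ * (k * y + C))))) y
      = ENNReal.ofReal ((l₂ * Real.exp (-l₁ * C)) * Real.exp (-(a * y))) := by
    intro y hy
    have hy0 : 0 ≤ y := le_trans hB (le_of_lt hy)
    simp only [Pi.mul_apply]
    rw [exponentialPDF_of_nonneg hy0, ← ENNReal.ofReal_mul (by positivity)]
    congr 1
    rw [mul_assoc, ← Real.exp_add, mul_assoc, ← Real.exp_add]
    congr 1
    rw [ha_def]; ring
  rw [setLIntegral_congr_fun measurableSet_Ioi hcongr]
  rw [lintegral_ofReal_exp_Ioi ha (by positivity)]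
  congr 1
  rw [show -l₁ * C - a * B = (-l₁ * C) + (-(a * B)) by ring, Real.exp_add]
  field_simp

theorem uplink_noma_common_outage_probability
    {Ω : Type*} [MeasurableSpace Ω] (P : Measure Ω) [IsProbabilityMeasure P]
    (l₁ l₂ ρ₁ ρ₂ ε₀ p B C k : ℝ)
    (hl₁ : 0 < l₁) (hl₂ : 0 < l₂) (hρ₁ : 0 < ρ₁) (hρ₂ : 0 < ρ₂) (hε₀ : 0 < ε₀)
    (hp : p ∈ Set.Icc (0 : ℝ) 1)
    (hBdef : B = ε₀ / ρ₂) (hCdef : C = ε₀ / ρ₁) (hkdef : k = ε₀ * ρ₂ / ρ₁)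
    (X₁ X₂ : Ω → ℝ) (hm1 : Measurable X₁) (hm2 : Measurable X₂)
    (hlaw1 : P.map X₁ = expMeasure l₁) (hlaw2 : P.map X₂ = expMeasure l₂)
    (hind : IndepFun X₁ X₂ P)
    (E : Set Ω) (hE : MeasurableSet E) (hPE : (P E).toReal = p)
    (hindE : Indep (MeasurableSpace.generateFrom {E})
      (MeasurableSpace.comap (fun ω => (X₁ ω, X₂ ω)) inferInstance) P)
    (S : Set Ω)
    (hS : S = (Eᶜ ∩ {ω | k * X₂ ω + C < X₁ ω ∧ B < X₂ ω}) ∪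
              (E ∩ {ω | k * X₁ ω + C < X₂ ω ∧ B < X₁ ω})) :
    (P Sᶜ).toReal =
      1 - (1 - p) * (l₂ / (l₂ + k * l₁)) * Real.exp (-l₁ * C - (l₂ + k * l₁) * B) -
        p * (l₁ / (l₁ + k * l₂)) * Real.exp (-l₂ * C - (l₁ + k * l₂) * B) := by
  have hB0 : 0 ≤ B := by rw [hBdef]; positivity
  have hC0 : 0 ≤ C := by rw [hCdef]; positivity
  have hk0 : 0 < k := by rw [hkdef]; positivity
  set pair : Ω → ℝ × ℝ := fun ω => (X₁ ω, X₂ ω) with hpair_def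
  have hpair : Measurable pair := hm1.prodMk hm2
  have hmap : P.map pair = (expMeasure l₁).prod (expMeasure l₂) := by
    rw [(indepFun_iff_map_prod_eq_prod_map_map hm1.aemeasurable hm2.aemeasurable).1 hind,
      hlaw1, hlaw2]
  set T₁ : Set (ℝ × ℝ) := {q : ℝ × ℝ | k * q.2 + C < q.1 ∧ B < q.2} with hT₁_def
  set T₂ : Set (ℝ × ℝ) := {q : ℝ × ℝ | k * q.1 + C < q.2 ∧ B < q.1} with hT₂_def
  have hT₁ : MeasurableSet T₁ :=
    ((measurableSet_lt ((measurable_snd.const_mul k).add_const C) measurable_fst).inter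
      (measurableSet_lt measurable_const measurable_snd))
  have hT₂ : MeasurableSet T₂ :=
    ((measurableSet_lt ((measurable_fst.const_mul k).add_const C) measurable_snd).inter
      (measurableSet_lt measurable_const measurable_fst))
  have hq₁ : P (pair ⁻¹' T₁)
      = ENNReal.ofReal (l₂ / (l₂ + k * l₁) * Real.exp (-l₁ * C - (l₂ + k * l₁) * B)) := by
    rw [← Measure.map_apply hpair hT₁, hmap]
    exact exp_joint_tail hl₁ hl₂ hk0 hC0 hB0
  have hq₂ : P (pair ⁻¹' T₂)
      = ENNReal.ofReal (l₁ / (l₁ + k * l₂) * Real.exp (-l₂ * C - (l₁ + k * l₂) * B)) := by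
    rw [← Measure.map_apply hpair hT₂, hmap]
    have hswap : ((expMeasure l₁).prod (expMeasure l₂)) T₂
        = ((expMeasure l₂).prod (expMeasure l₁))
            {q : ℝ × ℝ | k * q.2 + C < q.1 ∧ B < q.2} := by
      have : IsProbabilityMeasure (expMeasure l₁) := isProbabilityMeasure_expMeasure hl₁
      have : IsProbabilityMeasure (expMeasure l₂) := isProbabilityMeasure_expMeasure hl₂
      rw [← Measure.prod_swap, Measure.map_apply measurable_swap hT₂]
      have hpre : Prod.swap ⁻¹' T₂ = {q : ℝ × ℝ | k * q.2 + C < q.1 ∧ B < q.2} := by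
        ext q
        simp [hT₂_def, Set.mem_preimage, Set.mem_setOf_eq, Prod.swap]
      rw [hpre]
    rw [hswap]
    exact exp_joint_tail hl₂ hl₁ hk0 hC0 hB0
  -- independence of E and the pair σ-algebra
  have hIE := (ProbabilityTheory.Indep_iff _ _ P).1 hindE
  have hEmeas : MeasurableSet[MeasurableSpace.generateFrom {E}] E :=
    MeasurableSpace.measurableSet_generateFrom rfl
  have hA₁meas : MeasurableSet[MeasurableSpace.comap pair inferInstance] (pair ⁻¹' T₁) :=
    ⟨T₁, hT₁, rfl⟩
  have hA₂meas : MeasurableSet[MeasurableSpace.comap pair inferInstance] (pair ⁻¹' T₂) :=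
    ⟨T₂, hT₂, rfl⟩
  have hsplit1 : P (Eᶜ ∩ pair ⁻¹' T₁) = P Eᶜ * P (pair ⁻¹' T₁) :=
    hIE _ _ hEmeas.compl hA₁meas
  have hsplit2 : P (E ∩ pair ⁻¹' T₂) = P E * P (pair ⁻¹' T₂) :=
    hIE _ _ hEmeas hA₂meas
  have hSeq : S = (Eᶜ ∩ pair ⁻¹' T₁) ∪ (E ∩ pair ⁻¹' T₂) := hS
  have hSmeas : MeasurableSet S := by
    rw [hSeq]
    exact (hE.compl.inter (hpair hT₁)).union (hE.inter (hpair hT₂))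
  have hdisj : Disjoint (Eᶜ ∩ pair ⁻¹' T₁) (E ∩ pair ⁻¹' T₂) :=
    disjoint_compl_left.mono inter_subset_left inter_subset_left
  have hPS : P S = P Eᶜ * P (pair ⁻¹' T₁) + P E * P (pair ⁻¹' T₂) := by
    rw [hSeq, measure_union hdisj (hE.inter (hpair hT₂)), hsplit1, hsplit2]
  have hPSc : P Sᶜ = 1 - P S := by
    rw [measure_compl hSmeas (measure_ne_top _ _), measure_univ]
  have hPEc : (P Eᶜ).toReal = 1 - p := by
    rw [measure_compl hE (measure_ne_top _ _), measure_univ,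
      ENNReal.toReal_sub_of_le prob_le_one ENNReal.one_ne_top, ENNReal.toReal_one, hPE]
  have hr₁ : 0 ≤ l₂ / (l₂ + k * l₁) * Real.exp (-l₁ * C - (l₂ + k * l₁) * B) := by positivity
  have hr₂ : 0 ≤ l₁ / (l₁ + k * l₂) * Real.exp (-l₂ * C - (l₁ + k * l₂) * B) := by positivity
  have hPS_le : P S ≤ 1 := prob_le_one
  rw [hPSc, ENNReal.toReal_sub_of_le hPS_le ENNReal.one_ne_top, ENNReal.toReal_one, hPS,
    ENNReal.toReal_add (by finiteness) (by finiteness), ENNReal.toReal_mul, ENNReal.toReal_mul,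
    hq₁, hq₂, hPEc, hPE, ENNReal.toReal_ofReal hr₁, ENNReal.toReal_ofReal hr₂]
  ring
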